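/- Let U be a finite set and C_1, …, C_m ⊆ U (m ≥ 1) with ⋃_{i=1}^m C_i = U, and let G be the graph of the Maximum Coverage reduction built from this instance. Then for every k with 1 ≤ k ≤ m, the optimum of the Maximum Expansion problem on G equals the optimum of the Maximum Coverage instance shifted by the clique contribution: max_{S ⊆ I ⊎ U, |S| = k} |N(S)| = (m − k) + max_{T ⊆ {1,…,m}, |T| = k} |⋃_{i ∈ T} C_i|. (This is the correctness of the reduction used in Proposition 1 to show that the Maximum Expansion problem is NP-hard.) -/

import Mathlib

open Finset

/-- The neighborhood `N(S)` of a set of vertices `S`: all vertices outside `S`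
adjacent to some vertex of `S`. -/
def nbhd {V : Type*} [Fintype V] [DecidableEq V] (G : SimpleGraph V) [DecidableRel G.Adj]
    (S : Finset V) : Finset V :=
  Finset.univ.filter fun w => w ∉ S ∧ ∃ v ∈ S, G.Adj v w

/-- The graph of the Maximum Coverage reduction: vertex set `I ⊎ U` with
`I = Fin m` a clique of index vertices, `U` an independent set, and an edge
between index vertex `i` and element `u` exactly when `u ∈ C i`. -/
def redGraph {U : Type*} [DecidableEq U] (m : ℕ) (C : Fin m → Finset U) :
    SimpleGraph (Fin m ⊕ U) where
  Adj x y := match x, y with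
    | Sum.inl i, Sum.inl j => i ≠ j
    | Sum.inl i, Sum.inr u => u ∈ C i
    | Sum.inr u, Sum.inl i => u ∈ C i
    | Sum.inr _, Sum.inr _ => False
  symm := ⟨by
    rintro (i | u) (j | w) h
    · exact h.symm
    · exact h
    · exact h
    · exact h⟩
  loopless := ⟨by
    rintro (i | u) h
    · exact h rfl
    · exact h⟩

instance {U : Type*} [DecidableEq U] (m : ℕ) (C : Fin m → Finset U) :
    DecidableRel (redGraph m C).Adj := fun x y =>
  match x, y with
  | Sum.inl i, Sum.inl j => inferInstanceAs (Decidable (i ≠ j))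
  | Sum.inl i, Sum.inr u => inferInstanceAs (Decidable (u ∈ C i))
  | Sum.inr u, Sum.inl i => inferInstanceAs (Decidable (u ∈ C i))
  | Sum.inr _, Sum.inr _ => inferInstanceAs (Decidable False)

/-- **Correctness of the reduction used in Proposition 1.** For `1 ≤ k ≤ m`, the optimum
of the Maximum Expansion problem on the reduction graph equals the optimum of the Maximum
Coverage instance shifted by the clique contribution `m - k`. -/
theorem reduction_correct {U : Type*} [Fintype U] [DecidableEq U]
    (m k : ℕ) (hm : 1 ≤ m) (C : Fin m → Finset U)
    (hU : ∀ u : U, ∃ i : Fin m, u ∈ C i)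
    (hk : 1 ≤ k) (hkm : k ≤ m) :
    ((Finset.powersetCard k (Finset.univ : Finset (Fin m ⊕ U))).sup
        fun S => (nbhd (redGraph m C) S).card) =
      (m - k) + ((Finset.powersetCard k (Finset.univ : Finset (Fin m))).sup
        fun T => (T.biUnion C).card) := by
  apply le_antisymm
  · apply Finset.sup_le
    intro S hS
    rw [Finset.mem_powersetCard] at hS
    obtain ⟨-, hScard⟩ := hS
    set A := S.toLeft with hA
    set B := S.toRight with hB
    have hab : A.card + B.card = k := by rw [hA, hB, Finset.card_toLeft_add_card_toRight, hScard]
    -- choose covering indices for B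
    choose f hf using hU
    have hT0 : (A ∪ B.image f).card ≤ k := by
      calc (A ∪ B.image f).card ≤ A.card + (B.image f).card := card_union_le _ _
        _ ≤ A.card + B.card := by gcongr; exact card_image_le
        _ = k := hab
    obtain ⟨T, hT0T, hTcard⟩ := Finset.exists_superset_card_eq hT0
      (by simpa using hkm)
    -- bound pieces
    have h1 : (nbhd (redGraph m C) S).toLeft ⊆ Aᶜ := by
      intro i hi
      simp only [mem_toLeft, nbhd, mem_filter] at hi
      simp only [mem_compl, hA, mem_toLeft]
      exact hi.2.1
    have h2 : (nbhd (redGraph m C) S).toRight ⊆ A.biUnion C \ B := by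
      intro u hu
      simp only [mem_toRight, nbhd, mem_filter] at hu
      obtain ⟨-, hus, v, hv, hadj⟩ := hu
      rcases v with i | w
      · simp only [mem_sdiff, mem_biUnion]
        exact ⟨⟨i, by simpa [hA] using hv, hadj⟩, by simpa [hB] using hus⟩
      · exact absurd hadj (by simp [redGraph])
    have hsub : (A.biUnion C \ B) ∪ B ⊆ T.biUnion C := by
      intro u hu
      rcases mem_union.mp hu with h | h
      · obtain ⟨i, hi, hui⟩ := mem_biUnion.mp (mem_sdiff.mp h).1
        exact mem_biUnion.mpr ⟨i, hT0T (mem_union_left _ hi), hui⟩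
      · exact mem_biUnion.mpr ⟨f u, hT0T (mem_union_right _ (mem_image_of_mem f h)), hf u⟩
    have hdisj : Disjoint (A.biUnion C \ B) B := sdiff_disjoint
    have hkey : (A.biUnion C \ B).card + B.card ≤ (T.biUnion C).card := by
      rw [← card_union_of_disjoint hdisj]
      exact card_le_card hsub
    have hcardS : (nbhd (redGraph m C) S).card ≤ (m - A.card) + (A.biUnion C \ B).card := by
      rw [← Finset.card_toLeft_add_card_toRight (u := nbhd (redGraph m C) S)]
      have := card_le_card h1
      have hc : Aᶜ.card = m - A.card := by
        rw [card_compl, Fintype.card_fin]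
      have hle1 : (nbhd (redGraph m C) S).toLeft.card ≤ m - A.card :=
        hc ▸ card_le_card h1
      exact Nat.add_le_add hle1 (card_le_card h2)
    have hma : m - A.card = (m - k) + B.card := by omega
    have hle : (T.biUnion C).card ≤ (Finset.powersetCard k (Finset.univ : Finset (Fin m))).sup
        fun T => (T.biUnion C).card :=
      Finset.le_sup (f := fun T => (T.biUnion C).card)
        (Finset.mem_powersetCard.mpr ⟨Finset.subset_univ _, hTcard⟩)
    omega
  · have hne : (Finset.powersetCard k (Finset.univ : Finset (Fin m))).Nonempty := by
      apply Finset.powersetCard_nonempty.mpr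
      simpa using hkm
    obtain ⟨T, hT, hTeq⟩ := Finset.exists_mem_eq_sup _ hne (fun T => (T.biUnion C).card)
    rw [hTeq]
    rw [Finset.mem_powersetCard] at hT
    obtain ⟨-, hTcard⟩ := hT
    have hTne : T.Nonempty := card_pos.mp (by omega)
    set S : Finset (Fin m ⊕ U) := T.map ⟨Sum.inl, Sum.inl_injective⟩ with hS
    have hN : nbhd (redGraph m C) S = (Tᶜ).disjSum (T.biUnion C) := by
      ext x
      rcases x with i | u
      · simp only [nbhd, mem_filter, mem_univ, true_and, hS, mem_map,
          Function.Embedding.coeFn_mk, inl_mem_disjSum, mem_compl]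
        constructor
        · rintro ⟨h, -⟩ hi; exact h ⟨i, hi, rfl⟩
        · intro hi
          obtain ⟨j, hj⟩ := hTne
          refine ⟨by rintro ⟨j', hj', ⟨⟩⟩; exact hi hj', Sum.inl j, ⟨j, hj, rfl⟩, ?_⟩
          show j ≠ i
          rintro rfl; exact hi hj
      · simp only [nbhd, mem_filter, mem_univ, true_and, hS, mem_map,
          Function.Embedding.coeFn_mk, inr_mem_disjSum, mem_biUnion]
        constructor
        · rintro ⟨-, v, hv, hadj⟩
          obtain ⟨i, hi, rfl⟩ := hv
          exact ⟨i, hi, hadj⟩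
        · rintro ⟨i, hi, hui⟩
          exact ⟨by rintro ⟨j, -, ⟨⟩⟩, Sum.inl i, ⟨i, hi, rfl⟩, hui⟩
    have := Finset.le_sup (f := fun S => (nbhd (redGraph m C) S).card)
      (Finset.mem_powersetCard.mpr ⟨Finset.subset_univ S, by rw [hS, card_map, hTcard]⟩)
    rw [hN, card_disjSum, card_compl, Fintype.card_fin, hTcard] at this
    exact this
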